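/- arXiv:1507.05044 — 5 statements merged into one kernel-verified Lean document; each statement's English description precedes it below -/
import Mathlib

section
/- If X is a compact metric space and f : X → X satisfies d(f(x), f(y)) ≥ d(x, y) for all x, y ∈ X, then f is an isometry, i.e., d(f(x), f(y)) = d(x, y) for all x, y ∈ X. -/
private lemma iter_expand {X : Type*} [MetricSpace X] (f : X → X)
    (hf : ∀ x y : X, dist x y ≤ dist (f x) (f y)) :
    ∀ (k : ℕ) (a b : X), dist a b ≤ dist (f^[k] a) (f^[k] b) := by
  intro k
  induction k with
  | zero => simp
  | succ n ih =>
    intro a b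
    calc dist a b ≤ dist (f^[n] a) (f^[n] b) := ih a b
    _ ≤ dist (f (f^[n] a)) (f (f^[n] b)) := hf _ _
    _ = dist (f^[n+1] a) (f^[n+1] b) := by
        simp [Function.iterate_succ_apply']

private lemma almost_return {X : Type*} [MetricSpace X] [CompactSpace X] (f : X → X)
    (hf : ∀ x y : X, dist x y ≤ dist (f x) (f y)) (x y : X) {ε : ℝ} (hε : 0 < ε) :
    ∃ n : ℕ, 1 ≤ n ∧ dist (f^[n] x) x < ε ∧ dist (f^[n] y) y < ε := by
  -- consider the sequence (f^[n] x, f^[n] y) in the compact space X × X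
  set a : ℕ → X × X := fun n => (f^[n] x, f^[n] y) with ha
  obtain ⟨p, -, φ, hφ, hlim⟩ := (isCompact_univ (X := X × X)).tendsto_subseq
    (x := a) (fun n => Set.mem_univ _)
  have hcauchy : CauchySeq (a ∘ φ) := hlim.cauchySeq
  rw [Metric.cauchySeq_iff] at hcauchy
  obtain ⟨N, hN⟩ := hcauchy ε hε
  have hlt : φ N < φ (N + 1) := hφ (Nat.lt_succ_self N)
  have hd := hN (N + 1) (Nat.le_succ N) N le_rfl
  set m := φ N
  set n := φ (N + 1)
  refine ⟨n - m, by omega, ?_, ?_⟩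
  · have h1 : dist (f^[n - m] x) x ≤ dist (f^[m] (f^[n - m] x)) (f^[m] x) :=
      iter_expand f hf m _ _
    have h2 : f^[m] (f^[n - m] x) = f^[n] x := by
      rw [← Function.iterate_add_apply]
      congr 1; omega
    rw [h2] at h1
    calc dist (f^[n-m] x) x ≤ dist (f^[n] x) (f^[m] x) := h1
    _ ≤ dist (a (φ (N+1))) (a (φ N)) := le_max_left _ _
    _ < ε := hd
  · have h1 : dist (f^[n - m] y) y ≤ dist (f^[m] (f^[n - m] y)) (f^[m] y) :=
      iter_expand f hf m _ _
    have h2 : f^[m] (f^[n - m] y) = f^[n] y := by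
      rw [← Function.iterate_add_apply]
      congr 1; omega
    rw [h2] at h1
    calc dist (f^[n-m] y) y ≤ dist (f^[n] y) (f^[m] y) := h1
    _ ≤ dist (a (φ (N+1))) (a (φ N)) := le_max_right _ _
    _ < ε := hd

theorem expansive_isometry_compact {X : Type*} [MetricSpace X] [CompactSpace X]
    (f : X → X) (hf : ∀ x y : X, dist x y ≤ dist (f x) (f y)) :
    ∀ x y : X, dist (f x) (f y) = dist x y := by
  intro x y
  refine le_antisymm ?_ (hf x y)
  refine le_of_forall_pos_le_add fun ε hε => ?_
  obtain ⟨n, hn1, hx, hy⟩ := almost_return f hf x y (half_pos hε)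
  have key : dist (f x) (f y) ≤ dist (f^[n] x) (f^[n] y) := by
    have h := iter_expand f hf (n - 1) (f x) (f y)
    have hx' : f^[n - 1] (f x) = f^[n] x := by
      rw [← Function.iterate_succ_apply]
      congr 1; omega
    have hy' : f^[n - 1] (f y) = f^[n] y := by
      rw [← Function.iterate_succ_apply]
      congr 1; omega
    rwa [hx', hy'] at h
  calc dist (f x) (f y) ≤ dist (f^[n] x) (f^[n] y) := key
  _ ≤ dist (f^[n] x) x + dist x y + dist y (f^[n] y) := dist_triangle4 _ _ _ _
  _ ≤ ε/2 + dist x y + ε/2 := by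
      have := hy; rw [dist_comm] at this; linarith
  _ = dist x y + ε := by ring
end

section
/- Let X be a totally bounded metric space, Y a dense subset of X, and f : Y → X a map satisfying d(f(x), f(y)) ≥ d(x, y) for all x, y ∈ Y. Then f is an isometry: d(f(x), f(y)) = d(x, y) for all x, y ∈ Y. -/
theorem expansive_isometry_dense {X : Type*} [MetricSpace X]
    (hX : TotallyBounded (Set.univ : Set X))
    (Y : Set X) (hY : Dense Y)
    (f : Y → X) (hf : ∀ x y : Y, dist (x : X) (y : X) ≤ dist (f x) (f y)) :
    ∀ x y : Y, dist (f x) (f y) = dist (x : X) (y : X) := by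
  intro x y
  refine le_antisymm ?_ (hf x y)
  refine le_of_forall_pos_le_add ?_
  intro ε hε
  set e := ε / 16 with he
  have he0 : 0 < e := by positivity
  -- choice of approximate iterates using density
  have hchoice : ∀ (p : Y) (n : ℕ), ∃ q : Y, dist (q : X) (f p) < e / 2 ^ (n + 2) := by
    intro p n
    obtain ⟨q, hq, hq2⟩ := hY.exists_dist_lt (f p) (show (0:ℝ) < e / 2 ^ (n+2) by positivity)
    exact ⟨⟨q, hq⟩, by rwa [dist_comm] at hq2⟩
  choose g hg using hchoice
  -- the approximate orbit sequences
  let seq : Y → ℕ → Y := fun z n => Nat.rec z (fun k p => g p k) n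
  set a : ℕ → Y := seq x with ha_def
  set b : ℕ → Y := seq y with hb_def
  have ha : ∀ n, dist (a (n + 1) : X) (f (a n)) < e / 2 ^ (n + 2) := fun n => hg (a n) n
  have hb : ∀ n, dist (b (n + 1) : X) (f (b n)) < e / 2 ^ (n + 2) := fun n => hg (b n) n
  have ha0 : a 0 = x := rfl
  have hb0 : b 0 = y := rfl
  -- key expansion estimate along the approximate orbits
  have key : ∀ (u v : ℕ → Y),
      (∀ n, dist (u (n + 1) : X) (f (u n)) < e / 2 ^ (n + 2)) →
      (∀ n, dist (v (n + 1) : X) (f (v n)) < e / 2 ^ (n + 2)) →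
      ∀ (k n m : ℕ), dist (u n : X) (v m : X) ≤ dist (u (n + k) : X) (v (m + k) : X)
        + (e / 2 ^ (n + 1) - e / 2 ^ (n + k + 1)) + (e / 2 ^ (m + 1) - e / 2 ^ (m + k + 1)) := by
    intro u v hu hv k
    induction k with
    | zero => intro n m; simp
    | succ k ih =>
      intro n m
      have h1 := ih n m
      have h2 : dist (u (n + k) : X) ((v (m + k) : Y) : X) ≤
          dist (u (n + k + 1) : X) (v (m + k + 1) : X)
            + e / 2 ^ (n + k + 2) + e / 2 ^ (m + k + 2) := by
        have hexp := hf (u (n + k)) (v (m + k))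
        have h4 := dist_triangle4 (f (u (n + k))) (u (n + k + 1) : X)
          (v (m + k + 1) : X) (f (v (m + k)))
        have hun := hu (n + k)
        have hvm := hv (m + k)
        rw [dist_comm] at hun
        have hvm' : dist ((v (m + k + 1) : Y) : X) (f (v (m + k))) < e / 2 ^ (m + k + 2) := hvm
        linarith
      have hpn : e / 2 ^ (n + k + 1 + 1) = e / 2 ^ (n + k + 1) / 2 := by
        rw [pow_succ]; ring
      have hpm : e / 2 ^ (m + k + 1 + 1) = e / 2 ^ (m + k + 1) / 2 := by
        rw [pow_succ]; ring
      have goal' : dist (u n : X) (v m : X) ≤ dist (u (n + k + 1) : X) (v (m + k + 1) : X)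
          + (e / 2 ^ (n + 1) - e / 2 ^ (n + k + 1 + 1))
          + (e / 2 ^ (m + 1) - e / 2 ^ (m + k + 1 + 1)) := by
        have hn2 : e / 2 ^ (n + k + 2) = e / 2 ^ (n + k + 1 + 1) := rfl
        have hm2 : e / 2 ^ (m + k + 2) = e / 2 ^ (m + k + 1 + 1) := rfl
        rw [hn2, hpn] at h2
        rw [hm2, hpm] at h2
        rw [hpn, hpm]
        linarith
      exact goal'
  -- generic bound on the slack terms
  have slack2 : ∀ i j : ℕ, e / 2 ^ i - e / 2 ^ j ≤ e := by
    intro i j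
    have h1 : e / 2 ^ i ≤ e := by
      rw [div_le_iff₀ (by positivity)]
      have : (1:ℝ) ≤ 2 ^ i := one_le_pow₀ (by norm_num : (1:ℝ) ≤ 2)
      nlinarith
    have h2 : (0:ℝ) ≤ e / 2 ^ j := by positivity
    linarith
  -- pigeonhole via total boundedness
  obtain ⟨t, htf, htc⟩ := (Metric.totallyBounded_iff.mp hX) e he0
  have hcen : ∀ z : X, ∃ c ∈ t, dist z c < e := by
    intro z
    have := htc (Set.mem_univ z)
    simpa using this
  choose c hct hcd using hcen
  have hpigeon : ∃ n ∈ (Set.univ : Set ℕ), ∃ m ∈ (Set.univ : Set ℕ), n ≠ m ∧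
      (c (a n).val, c (b n).val) = (c (a m).val, c (b m).val) := by
    apply Set.infinite_univ.exists_ne_map_eq_of_mapsTo
      (f := fun n => (c (a n).val, c (b n).val)) (t := t ×ˢ t)
    · intro n _
      exact Set.mk_mem_prod (hct (a n).val) (hct (b n).val)
    · exact htf.prod htf
  obtain ⟨n, -, m, -, hnm, hcc⟩ := hpigeon
  have hmain : ∀ n m : ℕ, n < m → c (a n).val = c (a m).val → c (b n).val = c (b m).val →
      dist (f x) (f y) ≤ dist (x : X) (y : X) + ε := by
    clear hnm hcc n m
    intro n m hlt hca hcb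
    obtain ⟨k, hk⟩ : ∃ k, m = n + (k + 1) := ⟨m - n - 1, by omega⟩
    -- the two orbits nearly return
    have hsmall : ∀ (u : ℕ → Y), (∀ j, dist (u (j+1) : X) (f (u j)) < e / 2 ^ (j + 2)) →
        c (u n).val = c (u m).val → dist ((u 0).val) ((u (k+1)).val) ≤ 4 * e := by
      intro u hu hc
      have hnm2 : dist ((u n).val) ((u m).val) < 2 * e := by
        have t1 := dist_triangle ((u n).val) (c (u n).val) ((u m).val)
        have t2 := hcd (u n).val
        have t3 := hcd (u m).val
        have t4 : dist ((u m).val) (c (u m).val) = dist (c (u m).val) ((u m).val) :=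
          dist_comm _ _
        rw [hc] at t1 t2
        linarith
      have hkey := key u u hu hu n 0 (k + 1)
      simp only [Nat.zero_add] at hkey
      have hrw : k + 1 + n = m := by omega
      rw [hrw] at hkey
      have hs1 := slack2 1 (n + 1)
      have hs2 := slack2 (k + 1 + 1) (m + 1)
      linarith
    have hA := hsmall a ha hca
    have hB := hsmall b hb hcb
    rw [ha0] at hA
    rw [hb0] at hB
    -- step from index 1 to index k+1
    have hkey2 := key a b ha hb k 1 1
    have h1k : 1 + k = k + 1 := Nat.add_comm 1 k
    rw [h1k] at hkey2
    have hs3 := slack2 (1 + 1) (k + 1 + 1)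
    -- first step: from f x, f y to index 1
    have hstep : dist (f x) (f y) ≤ dist ((a 1).val) ((b 1).val) + e := by
      have t4 := dist_triangle4 (f x) ((a 1).val) ((b 1).val) (f y)
      have h5 : dist ((a 1).val) (f x) < e / 2 ^ (0 + 2) := ha 0
      have h6 : dist ((b 1).val) (f y) < e / 2 ^ (0 + 2) := hb 0
      have h5' : dist (f x) ((a 1).val) = dist ((a 1).val) (f x) := dist_comm _ _
      have hq : e / 2 ^ (0 + 2) = e / 4 := by norm_num
      rw [hq] at h5 h6
      linarith
    -- triangle back to x, y
    have htri : dist ((a (k+1)).val) ((b (k+1)).val) ≤ dist (x : X) (y : X) + 8 * e := by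
      have t5 := dist_triangle ((a (k+1)).val) (x : X) ((b (k+1)).val)
      have t6 := dist_triangle (x : X) (y : X) ((b (k+1)).val)
      have hA' : dist ((a (k+1)).val) (x : X) = dist (x : X) ((a (k+1)).val) := dist_comm _ _
      have hB' : dist ((y : X)) ((b (k+1)).val) ≤ 4 * e := hB
      linarith
    have hfinal : dist (f x) (f y) ≤ dist (x : X) (y : X) + 11 * e := by
      linarith
    have : 11 * e ≤ ε := by rw [he]; linarith
    linarith
  rcases hnm.lt_or_gt with h | h
  · exact hmain n m h (congrArg Prod.fst hcc) (congrArg Prod.snd hcc)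
  · exact hmain m n h (congrArg Prod.fst hcc).symm (congrArg Prod.snd hcc).symm
end

section
/- Let X be a totally bounded metric space and Y ⊆ X a dense subset. For every ε > 0, the supremum of the gauge G over maximal ε-nets of Y equals the supremum of G over maximal ε-nets of X. -/
open Filter Topology

theorem gauge_sup_dense {X : Type*} [MetricSpace X]
    (hX : TotallyBounded (Set.univ : Set X))
    (Y : Set X) (hY : Dense Y) (ε : ℝ) (hε : 0 < ε) (n : ℕ)
    (hmax : IsGreatest {m : ℕ | ∃ z : Fin m → X,
      ∀ i j : Fin m, i ≠ j → ε < dist (z i) (z j)} n) :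
    sSup {r : ℝ | ∃ x : Fin n → X, (∀ i, x i ∈ Y) ∧
        (∀ i j : Fin n, i ≠ j → ε < dist (x i) (x j)) ∧
        r = ∏ p ∈ Finset.univ.filter (fun p : Fin n × Fin n => p.1 < p.2),
              dist (x p.1) (x p.2)} =
    sSup {r : ℝ | ∃ x : Fin n → X,
        (∀ i j : Fin n, i ≠ j → ε < dist (x i) (x j)) ∧
        r = ∏ p ∈ Finset.univ.filter (fun p : Fin n × Fin n => p.1 < p.2),
              dist (x p.1) (x p.2)} := by
  classical
  set P : Finset (Fin n × Fin n) :=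
    Finset.univ.filter (fun p : Fin n × Fin n => p.1 < p.2) with hPdef
  -- approximation lemma: any separated tuple can be approximated by one in Y
  have approx : ∀ (x : Fin n → X), (∀ i j : Fin n, i ≠ j → ε < dist (x i) (x j)) →
      ∀ η : ℝ, 0 < η → ∃ y : Fin n → X, (∀ i, y i ∈ Y) ∧
        (∀ i j : Fin n, i ≠ j → ε < dist (y i) (y j)) ∧
        (∏ p ∈ P, dist (x p.1) (x p.2)) - η < ∏ p ∈ P, dist (y p.1) (y p.2) := by
    intro x hx η hη
    have hcont : Continuous (fun t : ℝ => ∏ p ∈ P, (dist (x p.1) (x p.2) - 2*t)) := by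
      apply continuous_finset_prod
      intro p _
      exact continuous_const.sub (continuous_const.mul continuous_id)
    have htend := hcont.tendsto 0
    simp only [mul_zero, sub_zero] at htend
    have h1 : ∀ᶠ t in 𝓝 (0:ℝ), (∏ p ∈ P, dist (x p.1) (x p.2)) - η
        < ∏ p ∈ P, (dist (x p.1) (x p.2) - 2*t) :=
      htend.eventually (eventually_gt_nhds (by linarith))
    have h2 : ∀ᶠ t in 𝓝 (0:ℝ), ∀ p ∈ P, ε < dist (x p.1) (x p.2) - 2*t := by
      rw [eventually_all_finset]
      intro p hp
      have hlt : p.1 < p.2 := (Finset.mem_filter.mp hp).2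
      have hd : ε < dist (x p.1) (x p.2) := hx p.1 p.2 (ne_of_lt hlt)
      have hc : Continuous fun t : ℝ => dist (x p.1) (x p.2) - 2*t :=
        continuous_const.sub (continuous_const.mul continuous_id)
      have := (hc.tendsto 0).eventually (eventually_gt_nhds (show ε < dist (x p.1) (x p.2) - 2*0 by simpa using hd))
      simpa using this
    have h3 := (h1.and h2).filter_mono (nhdsWithin_le_nhds (s := Set.Ioi (0:ℝ)))
    have h4 : ∀ᶠ t in 𝓝[>] (0:ℝ), 0 < t := eventually_mem_nhdsWithin
    obtain ⟨t, ⟨h1t, h2t⟩, ht0⟩ := (h3.and h4).exists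
    -- choose approximating points in Y
    have hy : ∀ i : Fin n, ∃ y, y ∈ Y ∧ dist (x i) y < t := by
      intro i
      rcases Metric.dense_iff.mp hY (x i) t ht0 with ⟨y, hy1, hy2⟩
      exact ⟨y, hy2, by simpa [dist_comm] using (Metric.mem_ball.mp hy1)⟩
    choose y hyY hyd using hy
    -- key distance bound for pairs in P
    have key : ∀ p ∈ P, dist (x p.1) (x p.2) - 2*t ≤ dist (y p.1) (y p.2) := by
      intro p _
      have h4' := dist_triangle4 (x p.1) (y p.1) (y p.2) (x p.2)
      have d1 := hyd p.1
      have d2 := hyd p.2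
      have : dist (y p.2) (x p.2) = dist (x p.2) (y p.2) := dist_comm _ _
      linarith [dist_comm (y p.2) (x p.2) ▸ d2]
    refine ⟨y, hyY, ?_, ?_⟩
    · intro i j hij
      rcases lt_trichotomy i j with h | h | h
      · have hp : (i, j) ∈ P := by simp [hPdef, h]
        have := lt_of_lt_of_le (h2t (i, j) hp) (key (i, j) hp)
        simpa using this
      · exact absurd h hij
      · have hp : (j, i) ∈ P := by simp [hPdef, h]
        have := lt_of_lt_of_le (h2t (j, i) hp) (key (j, i) hp)
        simpa [dist_comm] using this
    · refine lt_of_lt_of_le h1t ?_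
      apply Finset.prod_le_prod
      · intro p hp
        exact le_of_lt (lt_trans hε (h2t p hp))
      · exact key
  -- the two sets
  set A := {r : ℝ | ∃ x : Fin n → X, (∀ i, x i ∈ Y) ∧
      (∀ i j : Fin n, i ≠ j → ε < dist (x i) (x j)) ∧
      r = ∏ p ∈ P, dist (x p.1) (x p.2)} with hAdef
  set B := {r : ℝ | ∃ x : Fin n → X,
      (∀ i j : Fin n, i ≠ j → ε < dist (x i) (x j)) ∧
      r = ∏ p ∈ P, dist (x p.1) (x p.2)} with hBdef
  have hAB : A ⊆ B := by
    rintro r ⟨x, _, hsep, hr⟩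
    exact ⟨x, hsep, hr⟩
  -- boundedness
  obtain ⟨C, hC⟩ := Metric.isBounded_iff.mp hX.isBounded
  have hbddB : BddAbove B := by
    refine ⟨(max C 0) ^ P.card, ?_⟩
    rintro r ⟨x, hsep, rfl⟩
    calc ∏ p ∈ P, dist (x p.1) (x p.2)
        ≤ ∏ _p ∈ P, max C 0 := by
          apply Finset.prod_le_prod
          · intro p _; exact dist_nonneg
          · intro p _; exact le_trans (hC trivial trivial) (le_max_left _ _)
      _ = (max C 0) ^ P.card := Finset.prod_const _
  have hbddA : BddAbove A := hbddB.mono hAB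
  -- nonemptiness
  obtain ⟨z, hz⟩ := hmax.1
  have hBne : B.Nonempty := ⟨_, z, hz, rfl⟩
  have hAne : A.Nonempty := by
    obtain ⟨y, hyY, hysep, _⟩ := approx z hz 1 one_pos
    exact ⟨_, y, hyY, hysep, rfl⟩
  -- the two inequalities
  apply le_antisymm
  · exact csSup_le_csSup hbddB hAne hAB
  · apply csSup_le hBne
    rintro r ⟨x, hsep, rfl⟩
    refine le_of_forall_pos_le_add ?_
    intro η hη
    obtain ⟨y, hyY, hysep, hylt⟩ := approx x hsep η hη
    have hmem : (∏ p ∈ P, dist (y p.1) (y p.2)) ∈ A := ⟨y, hyY, hysep, rfl⟩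
    have := le_csSup hbddA hmem
    linarith
end

section
/- Let X be a totally bounded metric space, Y dense in X, f : Y → X with d(f(x), f(y)) ≥ d(x, y) for all x, y ∈ Y, and ε > 0. If (x_1, ..., x_n) is a maximal ε-net of Y whose gauge G satisfies G > g_ε(X)/(1+ε), then (f(x_1), ..., f(x_n)) is also a maximal ε-net of X and d(x_i, x_j) ≤ d(f(x_i), f(x_j)) < (1+ε) d(x_i, x_j) for all i ≠ j. -/
theorem image_of_near_maximal_net {X : Type*} [MetricSpace X]
    (hX : TotallyBounded (Set.univ : Set X))
    (Y : Set X) (hY : Dense Y)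
    (f : Y → X) (hf : ∀ x y : Y, dist (x : X) (y : X) ≤ dist (f x) (f y))
    (ε : ℝ) (hε : 0 < ε) (n : ℕ)
    (hmax : IsGreatest {m : ℕ | ∃ z : Fin m → X,
      ∀ i j : Fin m, i ≠ j → ε < dist (z i) (z j)} n)
    (x : Fin n → Y)
    (hsep : ∀ i j : Fin n, i ≠ j → ε < dist (x i : X) (x j : X))
    (hG : sSup {r : ℝ | ∃ z : Fin n → X,
        (∀ i j : Fin n, i ≠ j → ε < dist (z i) (z j)) ∧
        r = ∏ p ∈ Finset.univ.filter (fun p : Fin n × Fin n => p.1 < p.2),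
              dist (z p.1) (z p.2)} / (1 + ε) <
      ∏ p ∈ Finset.univ.filter (fun p : Fin n × Fin n => p.1 < p.2),
        dist (x p.1 : X) (x p.2 : X)) :
    (∀ i j : Fin n, i ≠ j → ε < dist (f (x i)) (f (x j))) ∧
    (∀ i j : Fin n, i ≠ j →
      dist (x i : X) (x j : X) ≤ dist (f (x i)) (f (x j)) ∧
      dist (f (x i)) (f (x j)) < (1 + ε) * dist (x i : X) (x j : X)) := by
  have hfsep : ∀ i j : Fin n, i ≠ j → ε < dist (f (x i)) (f (x j)) := fun i j hij =>
    lt_of_lt_of_le (hsep i j hij) (hf (x i) (x j))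
  refine ⟨hfsep, fun i j hij => ⟨hf _ _, ?_⟩⟩
  by_contra hcon
  push_neg at hcon
  set s : Finset (Fin n × Fin n) :=
    Finset.univ.filter (fun p : Fin n × Fin n => p.1 < p.2) with hs
  set S : Set ℝ := {r : ℝ | ∃ z : Fin n → X,
      (∀ i j : Fin n, i ≠ j → ε < dist (z i) (z j)) ∧
      r = ∏ p ∈ s, dist (z p.1) (z p.2)} with hSdef
  -- bounded above
  obtain ⟨C, hC⟩ := Metric.isBounded_iff.mp
    hX.isBounded
  have hbdd : BddAbove S := by
    refine ⟨(max C 1) ^ s.card, ?_⟩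
    rintro r ⟨z, hz, rfl⟩
    calc ∏ p ∈ s, dist (z p.1) (z p.2) ≤ ∏ _p ∈ s, max C 1 := by
          refine Finset.prod_le_prod (fun p _ => dist_nonneg) (fun p _ => ?_)
          exact le_max_of_le_left (hC (Set.mem_univ _) (Set.mem_univ _))
      _ = (max C 1) ^ s.card := Finset.prod_const _
  -- the image tuple's gauge is in S
  have hGmem : (∏ p ∈ s, dist (f (x p.1)) (f (x p.2))) ∈ S :=
    ⟨fun k => f (x k), hfsep, rfl⟩
  have hGle : (∏ p ∈ s, dist (f (x p.1)) (f (x p.2))) ≤ sSup S :=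
    le_csSup hbdd hGmem
  -- the distinguished pair
  set p0 : Fin n × Fin n := if h : i < j then (i, j) else (j, i) with hp0
  have hp0mem : p0 ∈ s := by
    rcases lt_or_gt_of_ne hij with h | h
    · simp [hp0, h, hs]
    · simp [hp0, not_lt.mpr h.le, h, hs]
  have hd0 : dist (x p0.1 : X) (x p0.2 : X) = dist (x i : X) (x j : X) := by
    by_cases h : i < j
    · simp [hp0, h]
    · simp [hp0, h, dist_comm]
  have hfd0 : dist (f (x p0.1)) (f (x p0.2)) = dist (f (x i)) (f (x j)) := by
    by_cases h : i < j
    · simp [hp0, h]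
    · simp [hp0, h, dist_comm]
  have hεpos : (0 : ℝ) < 1 + ε := by linarith
  have hprod_nonneg : (0 : ℝ) ≤ ∏ p ∈ s.erase p0, dist (x p.1 : X) (x p.2 : X) :=
    Finset.prod_nonneg (fun p _ => dist_nonneg)
  have key : (1 + ε) * ∏ p ∈ s, dist (x p.1 : X) (x p.2 : X) ≤
      ∏ p ∈ s, dist (f (x p.1)) (f (x p.2)) := by
    rw [← Finset.mul_prod_erase s (fun p => dist (f (x p.1)) (f (x p.2))) hp0mem,
      ← Finset.mul_prod_erase s (fun p => dist (x p.1 : X) (x p.2 : X)) hp0mem, ← mul_assoc]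
    refine mul_le_mul ?_ ?_ hprod_nonneg ?_
    · rw [hd0, hfd0]; exact hcon
    · exact Finset.prod_le_prod (fun p _ => dist_nonneg) (fun p _ => hf _ _)
    · rw [hfd0]; positivity
  have h1 : (∏ p ∈ s, dist (x p.1 : X) (x p.2 : X)) ≤ sSup S / (1 + ε) := by
    rw [le_div_iff₀ hεpos, mul_comm]
    exact key.trans hGle
  exact absurd hG (not_lt.mpr h1)
end

section
/- Let X be a compact metric space and f : X → X an expansive map (d(f(x), f(y)) ≥ d(x, y) for all x, y). Then f(X) is dense in X. -/
theorem expansive_dense_range {X : Type*} [MetricSpace X] [CompactSpace X]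
    (f : X → X) (hf : ∀ x y : X, dist x y ≤ dist (f x) (f y)) :
    Dense (Set.range f) := by
  have key : ∀ (a b : X) (k : ℕ), dist a b ≤ dist (f^[k] a) (f^[k] b) := by
    intro a b k
    induction k with
    | zero => simp
    | succ k ih =>
      rw [Function.iterate_succ_apply', Function.iterate_succ_apply']
      exact ih.trans (hf _ _)
  rw [Metric.dense_iff]
  intro x r hr
  set u : ℕ → X := fun n => f^[n] x with hu
  obtain ⟨l, -, φ, hφ, hlim⟩ := isCompact_univ.tendsto_subseq (fun n => Set.mem_univ (u n))
  obtain ⟨N, hN⟩ := Metric.tendsto_atTop.mp hlim (r / 2) (by linarith)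
  set m := φ N with hm
  set n := φ (N + 1) with hn
  have hmn : m < n := hφ (Nat.lt_succ_self N)
  have hd : dist (u m) (u n) < r := by
    calc dist (u m) (u n) ≤ dist (u m) l + dist (u n) l := dist_triangle_right _ _ _
      _ < r / 2 + r / 2 := add_lt_add (hN N le_rfl) (hN (N + 1) (Nat.le_succ N))
      _ = r := by ring
  refine ⟨f^[n - m] x, ?_, ?_⟩
  · rw [Metric.mem_ball, dist_comm]
    have h1 : dist x (f^[n - m] x) ≤ dist (f^[m] x) (f^[m] (f^[n - m] x)) := key _ _ m
    rw [← Function.iterate_add_apply] at h1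
    have h2 : m + (n - m) = n := Nat.add_sub_cancel' hmn.le
    rw [h2] at h1
    exact lt_of_le_of_lt h1 hd
  · refine ⟨f^[n - m - 1] x, ?_⟩
    have h3 : n - m = (n - m - 1) + 1 := by omega
    rw [h3, Function.iterate_succ_apply']
    simp
end
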